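/- Let n > 0 be a real number, let k ≥ 1, and let ν be a Borel measure on ℝ^k that is homogeneous of degree n, finite on compact sets, and vanishes outside the closed nonnegative orthant {x ∈ ℝ^k : x_i ≥ 0 for all i}. Write N(x) = x_1 + … + x_k, and let q be the pushforward under the map x ↦ N(x)⁻¹·x of the restriction of ν to {x : 0 < N(x) ≤ 1} (a Borel measure concentrated on Δ_k). Then: (i) q(U) = ν(cone(U) ∖ {0}) for every Borel set U ⊆ Δ_k; and (ii) ν({0}) = 0 and the pushforward of ν under the polar map x ↦ (N(x)⁻¹·x, N(x)) (defined for x with N(x) > 0; ν is concentrated on {N > 0}) equals the product measure q ⊗ ρ_n on ℝ^k × ℝ, where ρ_n is the measure on ℝ with density t ↦ n·t^{n−1} on (0,∞) (and 0 elsewhere) with respect to Lebesgue measure. -/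

import Mathlib

open MeasureTheory Set
open scoped Pointwise ENNReal

private def pN (k : ℕ) (x : Fin k → ℝ) : ℝ := ∑ i, x i
private noncomputable def pF (k : ℕ) (x : Fin k → ℝ) : Fin k → ℝ := (pN k x)⁻¹ • x

private lemma pN_meas (k : ℕ) : Measurable (pN k) :=
  Finset.measurable_sum _ (fun i _ => measurable_pi_apply i)

private lemma pF_meas (k : ℕ) : Measurable (pF k) :=
  ((pN_meas k).inv).smul measurable_id

private lemma pN_smul (k : ℕ) (t : ℝ) (x : Fin k → ℝ) : pN k (t • x) = t * pN k x := by
  simp [pN, Finset.mul_sum]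

private lemma pF_smul (k : ℕ) {t : ℝ} (ht : t ≠ 0) (x : Fin k → ℝ) :
    pF k (t • x) = pF k x := by
  simp only [pF, pN_smul, smul_smul, mul_inv_rev]
  rw [mul_assoc, inv_mul_cancel₀ ht, mul_one]

private lemma pN_cont (k : ℕ) : Continuous (pN k) :=
  continuous_finset_sum _ fun i _ => continuous_apply i

private lemma cpt (k : ℕ) (t : ℝ) :
    IsCompact {x : Fin k → ℝ | (∀ i, 0 ≤ x i) ∧ pN k x ≤ t} := by
  refine IsCompact.of_isClosed_subset
    (isCompact_univ_pi fun _ => (isCompact_Icc (a := (0:ℝ)) (b := t))) ?_ ?_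
  · have hcl1 : IsClosed {x : Fin k → ℝ | ∀ i, 0 ≤ x i} := by
      have : {x : Fin k → ℝ | ∀ i, 0 ≤ x i} = ⋂ i, {x : Fin k → ℝ | 0 ≤ x i} := by
        ext x; simp
      rw [this]
      exact isClosed_iInter fun i => isClosed_le continuous_const (continuous_apply i)
    exact hcl1.inter (isClosed_le (pN_cont k) continuous_const)
  · intro x hx i _
    exact ⟨hx.1 i, le_trans (Finset.single_le_sum (fun j _ => hx.1 j) (Finset.mem_univ i)) hx.2⟩

section
variable {k : ℕ} {n : ℝ} {ν : Measure (Fin k → ℝ)}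

private lemma fin_le (hfin : ∀ K : Set (Fin k → ℝ), IsCompact K → ν K < ⊤)
    (horth : ν {x : Fin k → ℝ | ¬ ∀ i, 0 ≤ x i} = 0)
    (t : ℝ) {E : Set (Fin k → ℝ)} (hE : E ⊆ {x | pN k x ≤ t}) : ν E ≠ ⊤ := by
  have hsub : E ⊆ {x : Fin k → ℝ | (∀ i, 0 ≤ x i) ∧ pN k x ≤ t} ∪
      {x : Fin k → ℝ | ¬ ∀ i, 0 ≤ x i} := by
    intro x hx
    by_cases h : ∀ i, 0 ≤ x i
    · exact Or.inl ⟨h, hE hx⟩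
    · exact Or.inr h
  refine ne_top_of_le_ne_top ?_ (measure_mono hsub)
  refine ne_top_of_le_ne_top ?_ (measure_union_le _ _)
  rw [horth, add_zero]
  exact (hfin _ (cpt k t)).ne

private lemma nu_zero (hn : 0 < n)
    (hhom : ∀ t : ℝ, 0 < t → ∀ A : Set (Fin k → ℝ), MeasurableSet A →
      ν (t • A) = ENNReal.ofReal (t ^ n) * ν A)
    (hfin : ∀ K : Set (Fin k → ℝ), IsCompact K → ν K < ⊤) :
    ν {(0 : Fin k → ℝ)} = 0 := by
  have h2 := hhom 2 (by norm_num) {0} (measurableSet_singleton 0)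
  rw [Set.smul_set_singleton, smul_zero] at h2
  have hfin0 : ν {(0 : Fin k → ℝ)} ≠ ⊤ := (hfin _ isCompact_singleton).ne
  by_contra h0
  have hc : (1 : ℝ≥0∞) < ENNReal.ofReal (2 ^ n) := by
    rw [show (1 : ℝ≥0∞) = ENNReal.ofReal 1 by simp]
    exact ENNReal.ofReal_lt_ofReal_iff_of_nonneg (by norm_num) |>.mpr
      ((Real.one_lt_rpow_iff_of_pos (by norm_num)).mpr (Or.inl ⟨by norm_num, hn⟩))
  have : ν {(0 : Fin k → ℝ)} < ENNReal.ofReal (2 ^ n) * ν {(0 : Fin k → ℝ)} := by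
    calc ν {(0 : Fin k → ℝ)} = 1 * ν {(0 : Fin k → ℝ)} := (one_mul _).symm
    _ < ENNReal.ofReal (2 ^ n) * ν {(0 : Fin k → ℝ)} := by
        exact ENNReal.mul_lt_mul_left h0 hfin0 hc
  rw [← h2] at this
  exact lt_irrefl _ this

private lemma nu_le0 (hn : 0 < n)
    (hhom : ∀ t : ℝ, 0 < t → ∀ A : Set (Fin k → ℝ), MeasurableSet A →
      ν (t • A) = ENNReal.ofReal (t ^ n) * ν A)
    (hfin : ∀ K : Set (Fin k → ℝ), IsCompact K → ν K < ⊤)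
    (horth : ν {x : Fin k → ℝ | ¬ ∀ i, 0 ≤ x i} = 0) :
    ν {x : Fin k → ℝ | pN k x ≤ 0} = 0 := by
  have hsub : {x : Fin k → ℝ | pN k x ≤ 0} ⊆
      {x : Fin k → ℝ | ¬ ∀ i, 0 ≤ x i} ∪ {(0 : Fin k → ℝ)} := by
    intro x hx
    by_cases h : ∀ i, 0 ≤ x i
    · right
      have hsum : pN k x = 0 := le_antisymm hx (Finset.sum_nonneg fun i _ => h i)
      have := (Finset.sum_eq_zero_iff_of_nonneg (fun i _ => h i)).mp hsum
      funext i
      exact this i (Finset.mem_univ i)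
    · exact Or.inl h
  refine measure_mono_null hsub (measure_union_null horth (nu_zero hn hhom hfin))

end

private lemma scale_set (k : ℕ) (A : Set (Fin k → ℝ)) {t : ℝ} (ht : 0 < t) :
    t • (pF k ⁻¹' A ∩ pN k ⁻¹' Ioc (0:ℝ) 1) = pF k ⁻¹' A ∩ pN k ⁻¹' Ioc (0:ℝ) t := by
  ext y
  simp only [Set.mem_smul_set, Set.mem_inter_iff, Set.mem_preimage, Set.mem_Ioc]
  constructor
  · rintro ⟨x, ⟨hA, h0, h1⟩, rfl⟩
    rw [pF_smul k ht.ne', pN_smul]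
    exact ⟨hA, mul_pos ht h0, by nlinarith⟩
  · rintro ⟨hA, h0, h1⟩
    refine ⟨t⁻¹ • y, ⟨?_, ?_, ?_⟩, smul_inv_smul₀ ht.ne' y⟩
    · rw [pF_smul k (inv_ne_zero ht.ne')]; exact hA
    · rw [pN_smul]; exact mul_pos (inv_pos.mpr ht) h0
    · rw [pN_smul, ← div_eq_inv_mul, div_le_one ht]; exact h1

section
variable {k : ℕ} {n : ℝ} {ν : Measure (Fin k → ℝ)}

private lemma scale_meas
    (hhom : ∀ t : ℝ, 0 < t → ∀ A : Set (Fin k → ℝ), MeasurableSet A →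
      ν (t • A) = ENNReal.ofReal (t ^ n) * ν A)
    {A : Set (Fin k → ℝ)} (mA : MeasurableSet A) {t : ℝ} (ht : 0 < t) :
    ν (pF k ⁻¹' A ∩ pN k ⁻¹' Ioc (0:ℝ) t)
      = ENNReal.ofReal (t ^ n) * ν (pF k ⁻¹' A ∩ pN k ⁻¹' Ioc (0:ℝ) 1) := by
  rw [← scale_set k A ht]
  exact hhom t ht _ ((pF_meas k mA).inter (pN_meas k measurableSet_Ioc))

private lemma scale_meas' (hn : 0 < n)
    (hhom : ∀ t : ℝ, 0 < t → ∀ A : Set (Fin k → ℝ), MeasurableSet A →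
      ν (t • A) = ENNReal.ofReal (t ^ n) * ν A)
    {A : Set (Fin k → ℝ)} (mA : MeasurableSet A) {t : ℝ} (ht : 0 ≤ t) :
    ν (pF k ⁻¹' A ∩ pN k ⁻¹' Ioc (0:ℝ) t)
      = ENNReal.ofReal (t ^ n) * ν (pF k ⁻¹' A ∩ pN k ⁻¹' Ioc (0:ℝ) 1) := by
  rcases eq_or_lt_of_le ht with rfl | ht'
  · rw [Set.Ioc_self, Set.preimage_empty, Set.inter_empty, measure_empty,
      Real.zero_rpow hn.ne', ENNReal.ofReal_zero, zero_mul]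
  · exact scale_meas hhom mA ht'

end

private lemma rho_Ioc_zero {n : ℝ} {a b : ℝ} (h : ∀ t ∈ Ioc a b, t ≤ 0) :
    (volume.withDensity
      (fun t : ℝ => ENNReal.ofReal (if 0 < t then n * t ^ (n - 1) else 0))) (Ioc a b) = 0 := by
  rw [withDensity_apply _ measurableSet_Ioc,
    setLIntegral_congr_fun_ae measurableSet_Ioc
      (ae_of_all _ (fun t ht => by
        rw [if_neg (not_lt.mpr (h t ht)), ENNReal.ofReal_zero] :
        ∀ t ∈ Ioc a b, ENNReal.ofReal (if 0 < t then n * t ^ (n - 1) else 0) = (fun _ => (0:ℝ≥0∞)) t)),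
    lintegral_zero]

private lemma rho_Ioc {n : ℝ} (hn : 0 < n) {c b : ℝ} (hc : 0 ≤ c) (hcb : c < b) :
    (volume.withDensity
      (fun t : ℝ => ENNReal.ofReal (if 0 < t then n * t ^ (n - 1) else 0))) (Ioc c b)
      = ENNReal.ofReal (b ^ n - c ^ n) := by
  rw [withDensity_apply _ measurableSet_Ioc,
    setLIntegral_congr_fun_ae measurableSet_Ioc
      (ae_of_all _ (fun t ht => by
        rw [if_pos (lt_of_le_of_lt hc ht.1)] :
        ∀ t ∈ Ioc c b, ENNReal.ofReal (if 0 < t then n * t ^ (n - 1) else 0)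
          = (fun u => ENNReal.ofReal (n * u ^ (n - 1))) t))]
  have hintOn : IntegrableOn (fun t : ℝ => n * t ^ (n - 1)) (Ioc c b) volume :=
    (intervalIntegrable_iff_integrableOn_Ioc_of_le hcb.le).mp
      ((intervalIntegral.intervalIntegrable_rpow' (by linarith)).const_mul n)
  have hnn : 0 ≤ᵐ[volume.restrict (Ioc c b)] fun t : ℝ => n * t ^ (n - 1) :=
    (ae_restrict_iff' measurableSet_Ioc).mpr (ae_of_all _ fun t ht =>
      mul_nonneg hn.le (Real.rpow_nonneg (hc.trans ht.1.le) _))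
  rw [← ofReal_integral_eq_lintegral_ofReal hintOn hnn]
  congr 1
  rw [← intervalIntegral.integral_of_le hcb.le, intervalIntegral.integral_const_mul,
    integral_rpow (Or.inl (by linarith : (-1:ℝ) < n - 1))]
  have hh : n - 1 + 1 = n := by ring
  rw [hh, mul_comm, div_mul_cancel₀ _ hn.ne']

/-- Let `n > 0`, `k ≥ 1`, and let `ν` be a Borel measure on `ℝ^k`
homogeneous of degree `n`, finite on compact sets, and vanishing outside the closed
nonnegative orthant.  Write `N x = ∑ i, x i` and let `q` be the pushforward under
`x ↦ (N x)⁻¹ • x` of the restriction of `ν` to `{x | 0 < N x ≤ 1}`.  Then: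
(i) `q U = ν (cone U \ {0})` for every Borel `U ⊆ Δ_k`; and
(ii) `ν {0} = 0` and the pushforward of `ν` under the polar map `x ↦ ((N x)⁻¹ • x, N x)`
equals the product measure `q ⊗ ρ_n`, where `ρ_n` has density `t ↦ n·t^(n-1)` on `(0,∞)`. -/
theorem stmt2 (k : ℕ) (hk : 1 ≤ k) (n : ℝ) (hn : 0 < n)
    (ν : Measure (Fin k → ℝ))
    (hhom : ∀ t : ℝ, 0 < t → ∀ A : Set (Fin k → ℝ), MeasurableSet A →
      ν (t • A) = ENNReal.ofReal (t ^ n) * ν A)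
    (hfin : ∀ K : Set (Fin k → ℝ), IsCompact K → ν K < ⊤)
    (horth : ν {x : Fin k → ℝ | ¬ ∀ i, 0 ≤ x i} = 0)
    (q : Measure (Fin k → ℝ))
    (hq : q = Measure.map (fun x : Fin k → ℝ => (∑ i, x i)⁻¹ • x)
        (ν.restrict {x : Fin k → ℝ | 0 < ∑ i, x i ∧ ∑ i, x i ≤ 1})) :
    (∀ U : Set (Fin k → ℝ), MeasurableSet U → U ⊆ stdSimplex ℝ (Fin k) →
        q U = ν ({y : Fin k → ℝ | ∃ t ∈ Set.Icc (0 : ℝ) 1, ∃ u ∈ U, y = t • u} \ {0})) ∧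
      ν {(0 : Fin k → ℝ)} = 0 ∧
        Measure.map (fun x : Fin k → ℝ => ((∑ i, x i)⁻¹ • x, ∑ i, x i)) ν =
          q.prod (volume.withDensity
            (fun t : ℝ => if 0 < t then ENNReal.ofReal (n * t ^ (n - 1)) else 0)) := by
  have hzero := nu_zero hn hhom hfin
  have hle0 := nu_le0 hn hhom hfin horth
  have hqA : ∀ A : Set (Fin k → ℝ), MeasurableSet A →
      q A = ν (pF k ⁻¹' A ∩ pN k ⁻¹' Ioc (0:ℝ) 1) := by
    intro A mA
    rw [hq]
    rw [show (fun x : Fin k → ℝ => (∑ i, x i)⁻¹ • x) = pF k from rfl,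
        show {x : Fin k → ℝ | 0 < ∑ i, x i ∧ ∑ i, x i ≤ 1} = pN k ⁻¹' Ioc (0:ℝ) 1 from rfl]
    rw [Measure.map_apply (pF_meas k) mA, Measure.restrict_apply (pF_meas k mA)]
  have hfinS : ∀ A : Set (Fin k → ℝ),
      ν (pF k ⁻¹' A ∩ pN k ⁻¹' Ioc (0:ℝ) 1) ≠ ⊤ := fun A =>
    fin_le hfin horth 1 (fun x hx => hx.2.2)
  refine ⟨?_, hzero, ?_⟩
  · -- part (i)
    intro U mU hU
    rw [hqA U mU]
    congr 1
    ext x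
    simp only [Set.mem_inter_iff, Set.mem_preimage, Set.mem_Ioc, Set.mem_diff,
      Set.mem_setOf_eq, Set.mem_singleton_iff, Set.mem_Icc]
    constructor
    · rintro ⟨hU', h0, h1⟩
      refine ⟨⟨pN k x, ⟨h0.le, h1⟩, pF k x, hU', ?_⟩, ?_⟩
      · exact (smul_inv_smul₀ h0.ne' x).symm
      · rintro rfl
        simp [pN] at h0
    · rintro ⟨⟨t, ⟨ht0, ht1⟩, u, huU, rfl⟩, hne⟩
      have hu := hU huU
      have hu1 : pN k u = 1 := hu.2
      have ht0' : t ≠ 0 := fun h => hne (by rw [h, zero_smul])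
      have htpos : 0 < t := lt_of_le_of_ne ht0 (Ne.symm ht0')
      refine ⟨?_, ?_, ?_⟩
      · rw [pF_smul k ht0']
        simpa only [pF, hu1, inv_one, one_smul] using huU
      · rw [pN_smul, hu1, mul_one]; exact htpos
      · rw [pN_smul, hu1, mul_one]; exact ht1
  · -- part (ii) : product decomposition
    have hd : (fun t : ℝ => if 0 < t then ENNReal.ofReal (n * t ^ (n - 1)) else 0)
        = fun t : ℝ => ENNReal.ofReal (if 0 < t then n * t ^ (n - 1) else 0) := by
      funext t; split <;> simp
    rw [hd]
    have hqfin : IsFiniteMeasure q :=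
      ⟨by rw [hqA univ MeasurableSet.univ]; exact (hfinS univ).lt_top⟩
    refine (Measure.prod_eq ?_).symm
    intro s t ms mt
    rw [show (fun x : Fin k → ℝ => ((∑ i, x i)⁻¹ • x, ∑ i, x i))
        = fun x => (pF k x, pN k x) from rfl]
    rw [Measure.map_apply ((pF_meas k).prodMk (pN_meas k)) (ms.prod mt),
      Set.mk_preimage_prod]
    set ρ : Measure ℝ :=
      volume.withDensity (fun t : ℝ => ENNReal.ofReal (if 0 < t then n * t ^ (n - 1) else 0))
      with hρ
    have key : Measure.map (pN k) (ν.restrict (pF k ⁻¹' s)) = q s • ρ := by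
      refine Measure.ext_of_Ioc' _ _ ?_ ?_
      · intro a b hab
        rw [Measure.map_apply (pN_meas k) measurableSet_Ioc,
          Measure.restrict_apply (pN_meas k measurableSet_Ioc)]
        exact fin_le hfin horth b (fun x hx => hx.1.2)
      · intro a b hab
        rw [Measure.map_apply (pN_meas k) measurableSet_Ioc,
          Measure.restrict_apply (pN_meas k measurableSet_Ioc), Set.inter_comm,
          Measure.smul_apply, smul_eq_mul]
        rcases le_or_gt b 0 with hb | hb
        · rw [measure_mono_null (fun x hx => hx.2.2.trans hb :
              pF k ⁻¹' s ∩ pN k ⁻¹' Ioc a b ⊆ {x | pN k x ≤ 0}) hle0,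
            hρ, rho_Ioc_zero (fun u hu => hu.2.trans hb), mul_zero]
        · set c := max a 0 with hcdef
          have hc0 : 0 ≤ c := le_max_right a 0
          have hcb : c < b := max_lt hab hb
          have hac : a ≤ c := le_max_left a 0
          have hIocac : ∀ u ∈ Ioc a c, u ≤ 0 := by
            intro u hu
            rcases le_or_gt a 0 with ha | ha
            · have : c = 0 := max_eq_right ha
              exact hu.2.trans this.le
            · have : c = a := max_eq_left ha.le
              exact absurd (hu.1.trans_le (hu.2.trans this.le)) (lt_irrefl a)
          have hsplit : Ioc a b = Ioc a c ∪ Ioc c b :=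
            (Set.Ioc_union_Ioc_eq_Ioc hac hcb.le).symm
          have hL : ν (pF k ⁻¹' s ∩ pN k ⁻¹' Ioc a b)
              = ν (pF k ⁻¹' s ∩ pN k ⁻¹' Ioc c b) := by
            rw [hsplit, Set.preimage_union, Set.inter_union_distrib_left]
            have h0' : ν (pF k ⁻¹' s ∩ pN k ⁻¹' Ioc a c) = 0 :=
              measure_mono_null (fun x hx => hIocac _ hx.2) hle0
            refine le_antisymm ?_ (measure_mono Set.subset_union_right)
            calc ν ((pF k ⁻¹' s ∩ pN k ⁻¹' Ioc a c) ∪ (pF k ⁻¹' s ∩ pN k ⁻¹' Ioc c b))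
                ≤ ν (pF k ⁻¹' s ∩ pN k ⁻¹' Ioc a c) + ν (pF k ⁻¹' s ∩ pN k ⁻¹' Ioc c b) :=
                  measure_union_le _ _
              _ = ν (pF k ⁻¹' s ∩ pN k ⁻¹' Ioc c b) := by rw [h0', zero_add]
          have hR : ρ (Ioc a b) = ρ (Ioc c b) := by
            rw [hsplit]
            refine le_antisymm ?_ (measure_mono Set.subset_union_right)
            calc ρ (Ioc a c ∪ Ioc c b) ≤ ρ (Ioc a c) + ρ (Ioc c b) := measure_union_le _ _
              _ = ρ (Ioc c b) := by rw [hρ, rho_Ioc_zero hIocac, zero_add]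
          have hcn : c ^ n ≤ b ^ n := Real.rpow_le_rpow hc0 hcb.le hn.le
          have hbc : ν (pF k ⁻¹' s ∩ pN k ⁻¹' Ioc c b)
              = ENNReal.ofReal (b ^ n - c ^ n) * ν (pF k ⁻¹' s ∩ pN k ⁻¹' Ioc (0:ℝ) 1) := by
            have hdisj : Disjoint (Ioc (0:ℝ) c) (Ioc c b) := Set.Ioc_disjoint_Ioc_of_le le_rfl
            have hu : Ioc (0:ℝ) b = Ioc 0 c ∪ Ioc c b :=
              (Set.Ioc_union_Ioc_eq_Ioc hc0 hcb.le).symm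
            have hadd : ν (pF k ⁻¹' s ∩ pN k ⁻¹' Ioc (0:ℝ) b)
                = ν (pF k ⁻¹' s ∩ pN k ⁻¹' Ioc (0:ℝ) c)
                  + ν (pF k ⁻¹' s ∩ pN k ⁻¹' Ioc c b) := by
              rw [hu, Set.preimage_union, Set.inter_union_distrib_left]
              exact measure_union
                (((hdisj.preimage (pN k)).mono Set.inter_subset_right Set.inter_subset_right))
                ((pF_meas k ms).inter (pN_meas k measurableSet_Ioc))
            rw [scale_meas' hn hhom ms hb.le, scale_meas' hn hhom ms hc0] at hadd
            have hsplit2 : ENNReal.ofReal (b ^ n)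
                = ENNReal.ofReal (c ^ n) + ENNReal.ofReal (b ^ n - c ^ n) := by
              rw [← ENNReal.ofReal_add (Real.rpow_nonneg hc0 n) (by linarith)]
              congr 1; ring
            rw [hsplit2, add_mul] at hadd
            exact ((ENNReal.add_right_inj
              (ENNReal.mul_ne_top ENNReal.ofReal_ne_top (hfinS s))).mp hadd).symm
          rw [hL, hbc, hR, hρ, rho_Ioc hn hc0 hcb, hqA s ms, mul_comm]
    calc ν (pF k ⁻¹' s ∩ pN k ⁻¹' t)
        = Measure.map (pN k) (ν.restrict (pF k ⁻¹' s)) t := by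
          rw [Measure.map_apply (pN_meas k) mt,
            Measure.restrict_apply (pN_meas k mt), Set.inter_comm]
      _ = (q s • ρ) t := by rw [key]
      _ = q s * ρ t := by rw [Measure.smul_apply, smul_eq_mul]
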